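/- (Operator Equivalence Theorem, integral form.) Let n ≥ 1, μ ∈ ℝⁿ, Σ a symmetric positive definite real n×n matrix, and let p : ℝⁿ → ℝ be the associated Gaussian density. Let h : ℝⁿ → ℝⁿ be continuously differentiable and M : ℝⁿ → ℝ^{n×n} twice continuously differentiable with M(x) symmetric for every x. Then for every twice continuously differentiable Ψ : ℝⁿ → ℝ with compact support, ∫_{ℝⁿ} [ Σᵢ hᵢ(x) ∂Ψ/∂xᵢ(x) + (1/2) Σᵢⱼ Mᵢⱼ(x) ∂²Ψ/∂xᵢ∂xⱼ(x) ] p(x) dx = ∫_{ℝⁿ} Ψ(x) · c(x) · p(x) dx, where c is the 𝒴-coefficient c(x) = (Σ⁻¹(x − μ))ᵀ h(x) − Σᵢ ∂hᵢ/∂xᵢ(x) + (1/2) Σᵢⱼ [ (−Σ⁻¹ + Σ⁻¹ (x − μ)(x − μ)ᵀ (Σ⁻¹)ᵀ)ᵢⱼ · Mᵢⱼ(x) + ∂²Mᵢⱼ/∂xᵢ∂xⱼ(x) ] − Σᵢⱼ ∂Mᵢⱼ/∂xᵢ(x) · (Σ⁻¹(x − μ))ⱼ. -/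

import Mathlib

open Matrix MeasureTheory

/-- Partial derivative of `f : ℝⁿ → ℝ` in the `i`-th coordinate direction. -/
noncomputable def pd {n : ℕ} (i : Fin n) (f : (Fin n → ℝ) → ℝ) (x : Fin n → ℝ) : ℝ :=
  fderiv ℝ f x (Pi.single i 1)

/-- Gaussian density with mean `μ` and covariance matrix `S`. -/
noncomputable def gaussianPdf {n : ℕ} (μ : Fin n → ℝ) (S : Matrix (Fin n) (Fin n) ℝ)
    (x : Fin n → ℝ) : ℝ :=
  (2 * Real.pi) ^ (-(n : ℝ) / 2) * S.det ^ (-(1 : ℝ) / 2) *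
    Real.exp (-(1 / 2) * ((x - μ) ⬝ᵥ S⁻¹.mulVec (x - μ)))

/-- The scalar `𝒴`-coefficient built from drift `h`, diffusion matrix `M`, and the
Gaussian parameters `μ`, `S`. -/
noncomputable def yCoeff {n : ℕ} (μ : Fin n → ℝ) (S : Matrix (Fin n) (Fin n) ℝ)
    (h : (Fin n → ℝ) → Fin n → ℝ) (M : (Fin n → ℝ) → Matrix (Fin n) (Fin n) ℝ)
    (x : Fin n → ℝ) : ℝ :=
  (S⁻¹.mulVec (x - μ)) ⬝ᵥ h x - (∑ i, pd i (fun y => h y i) x)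
    + (1 / 2) * ∑ i, ∑ j,
        ((-S⁻¹ + S⁻¹ * vecMulVec (x - μ) (x - μ) * (S⁻¹)ᵀ) i j * M x i j
          + pd i (fun y => pd j (fun z => M z i j) y) x)
    - ∑ i, ∑ j, pd i (fun y => M y i j) x * (S⁻¹.mulVec (x - μ)) j

variable {n : ℕ}

lemma pd_eq {i : Fin n} {f : (Fin n → ℝ) → ℝ} {x : Fin n → ℝ} {L : (Fin n → ℝ) →L[ℝ] ℝ}
    (h : HasFDerivAt f L x) : pd i f x = L (Pi.single i 1) := by
  unfold pd; rw [h.fderiv]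

lemma pd_mul {f g : (Fin n → ℝ) → ℝ} {x : Fin n → ℝ} (i : Fin n)
    (hf : DifferentiableAt ℝ f x) (hg : DifferentiableAt ℝ g x) :
    pd i (fun y => f y * g y) x = pd i f x * g x + f x * pd i g x := by
  unfold pd
  rw [fderiv_fun_mul hf hg]
  simp only [ContinuousLinearMap.add_apply, ContinuousLinearMap.smul_apply, smul_eq_mul]
  ring

lemma pd_const_mul {f : (Fin n → ℝ) → ℝ} {x : Fin n → ℝ} (i : Fin n) (c : ℝ)
    (hf : DifferentiableAt ℝ f x) :
    pd i (fun y => c * f y) x = c * pd i f x := by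
  unfold pd
  rw [fderiv_const_mul hf]
  simp

lemma pd_sub {f g : (Fin n → ℝ) → ℝ} {x : Fin n → ℝ} (i : Fin n)
    (hf : DifferentiableAt ℝ f x) (hg : DifferentiableAt ℝ g x) :
    pd i (fun y => f y - g y) x = pd i f x - pd i g x := by
  unfold pd
  rw [fderiv_fun_sub hf hg]
  simp

lemma contDiff_pd {m : ℕ∞} {f : (Fin n → ℝ) → ℝ} (i : Fin n) (hf : ContDiff ℝ (m + 1) f) :
    ContDiff ℝ m (pd i f) := by
  have : pd i f = fun x =>
      (ContinuousLinearMap.apply ℝ ℝ ((Pi.single i 1 : Fin n → ℝ))) (fderiv ℝ f x) := rfl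
  rw [this]
  exact (ContinuousLinearMap.apply ℝ ℝ _).contDiff.comp (hf.fderiv_right le_rfl)

lemma continuous_pd {f : (Fin n → ℝ) → ℝ} (i : Fin n) (hf : ContDiff ℝ 1 f) :
    Continuous (pd i f) := by
  have := contDiff_pd (m := 0) i (by exact_mod_cast hf)
  exact this.continuous

lemma hcs_pd {f : (Fin n → ℝ) → ℝ} (i : Fin n) (hf : HasCompactSupport f) :
    HasCompactSupport (pd i f) :=
  (hf.fderiv ℝ).comp_left (g := fun L : (Fin n → ℝ) →L[ℝ] ℝ => L (Pi.single i 1)) rfl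

lemma integral_pd_eq_zero (i : Fin n) {f : (Fin n → ℝ) → ℝ}
    (hf : ContDiff ℝ 1 f) (hfc : HasCompactSupport f) :
    ∫ x : Fin n → ℝ, pd i f x = 0 := by
  obtain ⟨C, hC⟩ := hf.lipschitzWith_of_hasCompactSupport hfc one_ne_zero
  have h1 : LipschitzWith 0 (fun _ : Fin n → ℝ => (1 : ℝ)) := LipschitzWith.const _
  have key := LipschitzWith.integral_lineDeriv_mul_eq (μ := (volume : Measure (Fin n → ℝ)))
    h1 hC hfc (-(Pi.single i 1))
  have hz : ∀ x : Fin n → ℝ, lineDeriv ℝ (fun _ : Fin n → ℝ => (1:ℝ)) x (-(Pi.single i 1)) = 0 :=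
    fun x => by rw [(differentiableAt_const (1:ℝ)).lineDeriv_eq_fderiv]; simp
  simp only [hz, zero_mul, integral_zero, neg_neg, mul_one] at key
  have heq : ∀ x : Fin n → ℝ, lineDeriv ℝ f x (Pi.single i 1) = pd i f x := fun x =>
    ((hf.differentiable one_ne_zero) x).lineDeriv_eq_fderiv
  simp only [heq] at key
  exact key.symm

/-- Integration by parts. -/
lemma integral_pd_mul {w u : (Fin n → ℝ) → ℝ}
    (hw : ContDiff ℝ 1 w) (hwc : HasCompactSupport w) (hu : ContDiff ℝ 1 u) (i : Fin n) :
    ∫ x : Fin n → ℝ, pd i w x * u x = - ∫ x : Fin n → ℝ, w x * pd i u x := by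
  have hprod : ContDiff ℝ 1 fun y => w y * u y := hw.mul hu
  have hprodc : HasCompactSupport fun y => w y * u y := hwc.mul_right
  have h0 : ∫ x : Fin n → ℝ, pd i (fun y => w y * u y) x = 0 :=
    integral_pd_eq_zero i hprod hprodc
  have heq : ∀ x, pd i (fun y => w y * u y) x = pd i w x * u x + w x * pd i u x := fun x =>
    pd_mul i ((hw.differentiable one_ne_zero) x) ((hu.differentiable one_ne_zero) x)
  have i1 : Integrable (fun x : Fin n → ℝ => pd i w x * u x) := by
    apply Continuous.integrable_of_hasCompactSupport
    · exact (continuous_pd i hw).mul (hu.continuous)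
    · exact (hcs_pd i hwc).mul_right
  have i2 : Integrable (fun x : Fin n → ℝ => w x * pd i u x) := by
    apply Continuous.integrable_of_hasCompactSupport
    · exact hw.continuous.mul (continuous_pd i hu)
    · exact hwc.mul_right
  simp only [heq] at h0
  rw [integral_add i1 i2] at h0
  linarith

lemma hasFDerivAt_quad (A : Matrix (Fin n) (Fin n) ℝ) (μ x : Fin n → ℝ) :
    HasFDerivAt (fun y : Fin n → ℝ => (y - μ) ⬝ᵥ A.mulVec (y - μ))
      (∑ j, ∑ k, ((x j - μ j) • ((A j k) • (ContinuousLinearMap.proj k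
            : (Fin n → ℝ) →L[ℝ] ℝ))
        + (A j k * (x k - μ k)) • (ContinuousLinearMap.proj j : (Fin n → ℝ) →L[ℝ] ℝ))) x := by
  have hfun : (fun y : Fin n → ℝ => (y - μ) ⬝ᵥ A.mulVec (y - μ))
      = fun y => ∑ j, ∑ k, (y j - μ j) * (A j k * (y k - μ k)) := by
    funext y
    simp only [dotProduct, Matrix.mulVec, Pi.sub_apply, Finset.mul_sum]
  rw [hfun]
  apply HasFDerivAt.fun_sum; intro j _
  apply HasFDerivAt.fun_sum; intro k _
  have h1 : HasFDerivAt (fun y : Fin n → ℝ => y j - μ j)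
      (ContinuousLinearMap.proj j : (Fin n → ℝ) →L[ℝ] ℝ) x :=
    ((ContinuousLinearMap.proj j : (Fin n → ℝ) →L[ℝ] ℝ).hasFDerivAt).sub_const _
  have h2 : HasFDerivAt (fun y : Fin n → ℝ => A j k * (y k - μ k))
      ((A j k) • (ContinuousLinearMap.proj k : (Fin n → ℝ) →L[ℝ] ℝ)) x :=
    (((ContinuousLinearMap.proj k : (Fin n → ℝ) →L[ℝ] ℝ).hasFDerivAt).sub_const _).const_mul _
  exact h1.mul h2

lemma pd_quad (A : Matrix (Fin n) (Fin n) ℝ) (μ x : Fin n → ℝ) (i : Fin n) :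
    pd i (fun y : Fin n → ℝ => (y - μ) ⬝ᵥ A.mulVec (y - μ)) x
      = (A.mulVec (x - μ)) i + (Aᵀ.mulVec (x - μ)) i := by
  rw [pd_eq (hasFDerivAt_quad A μ x)]
  simp only [ContinuousLinearMap.coe_sum', Finset.sum_apply, ContinuousLinearMap.add_apply,
    ContinuousLinearMap.smul_apply, ContinuousLinearMap.proj_apply, Pi.single_apply,
    smul_eq_mul, Matrix.mulVec, Matrix.transpose_apply, dotProduct, Pi.sub_apply]
  simp only [mul_ite, mul_one, mul_zero, ite_mul, one_mul, zero_mul,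
    Finset.sum_ite_irrel, Finset.sum_const_zero, Finset.sum_ite_eq, Finset.sum_ite_eq',
    Finset.mem_univ, if_true, Finset.sum_add_distrib]
  rw [add_comm]
  congr 1 <;> exact Finset.sum_congr rfl fun j _ => by ring

lemma contDiff_coord (j : Fin n) (c : ℝ) {m : ℕ∞} :
    ContDiff ℝ m (fun y : Fin n → ℝ => y j - c) :=
  ((ContinuousLinearMap.proj j : (Fin n → ℝ) →L[ℝ] ℝ).contDiff).sub contDiff_const

lemma contDiff_quad (A : Matrix (Fin n) (Fin n) ℝ) (μ : Fin n → ℝ) {m : ℕ∞} :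
    ContDiff ℝ m (fun y : Fin n → ℝ => (y - μ) ⬝ᵥ A.mulVec (y - μ)) := by
  have hfun : (fun y : Fin n → ℝ => (y - μ) ⬝ᵥ A.mulVec (y - μ))
      = fun y => ∑ j, ∑ k, (y j - μ j) * (A j k * (y k - μ k)) := by
    funext y
    simp only [dotProduct, Matrix.mulVec, Pi.sub_apply, Finset.mul_sum]
  rw [hfun]
  apply ContDiff.sum; intro j _
  apply ContDiff.sum; intro k _
  exact (contDiff_coord j (μ j)).mul (contDiff_const.mul (contDiff_coord k (μ k)))

lemma contDiff_gauss (μ : Fin n → ℝ) (S : Matrix (Fin n) (Fin n) ℝ) {m : ℕ∞} :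
    ContDiff ℝ m (gaussianPdf μ S) := by
  unfold gaussianPdf
  exact contDiff_const.mul
    (Real.contDiff_exp.comp (contDiff_const.mul (contDiff_quad S⁻¹ μ)))

lemma contDiff_mulVec (A : Matrix (Fin n) (Fin n) ℝ) (μ : Fin n → ℝ) (j : Fin n) {m : ℕ∞} :
    ContDiff ℝ m (fun y : Fin n → ℝ => (A.mulVec (y - μ)) j) := by
  have hfun : (fun y : Fin n → ℝ => (A.mulVec (y - μ)) j)
      = fun y => ∑ k, A j k * (y k - μ k) := by
    funext y; simp only [Matrix.mulVec, dotProduct, Pi.sub_apply]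
  rw [hfun]
  apply ContDiff.sum; intro k _
  exact contDiff_const.mul (contDiff_coord k (μ k))

lemma pd_mulVec (A : Matrix (Fin n) (Fin n) ℝ) (μ x : Fin n → ℝ) (j i : Fin n) :
    pd i (fun y : Fin n → ℝ => (A.mulVec (y - μ)) j) x = A j i := by
  have hfun : (fun y : Fin n → ℝ => (A.mulVec (y - μ)) j)
      = fun y => ∑ k, A j k * (y k - μ k) := by
    funext y; simp only [Matrix.mulVec, dotProduct, Pi.sub_apply]
  rw [hfun]
  have hF : HasFDerivAt (fun y : Fin n → ℝ => ∑ k, A j k * (y k - μ k))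
      (∑ k, (A j k) • (ContinuousLinearMap.proj k : (Fin n → ℝ) →L[ℝ] ℝ)) x := by
    apply HasFDerivAt.fun_sum; intro k _
    exact (((ContinuousLinearMap.proj k : (Fin n → ℝ) →L[ℝ] ℝ).hasFDerivAt).sub_const _).const_mul _
  rw [pd_eq hF]
  simp [Pi.single_apply, Finset.sum_ite_eq]

lemma pd_gauss (μ : Fin n → ℝ) (S : Matrix (Fin n) (Fin n) ℝ)
    (hSi : (S⁻¹)ᵀ = S⁻¹) (x : Fin n → ℝ) (i : Fin n) :
    pd i (gaussianPdf μ S) x = -((S⁻¹.mulVec (x - μ)) i) * gaussianPdf μ S x := by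
  have hq : HasFDerivAt (fun y : Fin n → ℝ => -(1/2 : ℝ) * ((y - μ) ⬝ᵥ S⁻¹.mulVec (y - μ)))
      ((-(1/2 : ℝ)) • (∑ j, ∑ k, ((x j - μ j) • ((S⁻¹ j k) • (ContinuousLinearMap.proj k
            : (Fin n → ℝ) →L[ℝ] ℝ))
        + (S⁻¹ j k * (x k - μ k)) • (ContinuousLinearMap.proj j : (Fin n → ℝ) →L[ℝ] ℝ)))) x :=
    (hasFDerivAt_quad S⁻¹ μ x).const_mul _
  have hexp := hq.exp
  have hfull := hexp.const_mul ((2 * Real.pi) ^ (-(n : ℝ) / 2) * S.det ^ (-(1 : ℝ) / 2))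
  have hpd := pd_eq (i := i) (x := x) hfull
  have : gaussianPdf μ S = fun x => ((2 * Real.pi) ^ (-(n : ℝ) / 2) * S.det ^ (-(1 : ℝ) / 2)) *
      Real.exp (-(1/2 : ℝ) * ((x - μ) ⬝ᵥ S⁻¹.mulVec (x - μ))) := by
    funext y; unfold gaussianPdf; norm_num
  rw [this]
  rw [hpd]
  have happ : (∑ j, ∑ k, ((x j - μ j) • ((S⁻¹ j k) • (ContinuousLinearMap.proj k
            : (Fin n → ℝ) →L[ℝ] ℝ))
        + (S⁻¹ j k * (x k - μ k)) • (ContinuousLinearMap.proj j : (Fin n → ℝ) →L[ℝ] ℝ)))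
          (Pi.single i 1)
      = (S⁻¹.mulVec (x - μ)) i + ((S⁻¹)ᵀ.mulVec (x - μ)) i := by
    have := pd_quad S⁻¹ μ x i
    rw [pd_eq (hasFDerivAt_quad S⁻¹ μ x)] at this
    exact this
  simp only [ContinuousLinearMap.smul_apply, ContinuousLinearMap.coe_smul', Pi.smul_apply,
    smul_eq_mul]
  rw [happ, hSi]
  ring

lemma key_pointwise (μ : Fin n → ℝ) (S : Matrix (Fin n) (Fin n) ℝ)
    (hSi : (S⁻¹)ᵀ = S⁻¹)
    (h : (Fin n → ℝ) → Fin n → ℝ) (hh : ∀ i, ContDiff ℝ 1 fun y => h y i)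
    (M : (Fin n → ℝ) → Matrix (Fin n) (Fin n) ℝ)
    (hM : ∀ i j, ContDiff ℝ 2 fun y => M y i j)
    (hMsymm : ∀ x, (M x).IsSymm) (x : Fin n → ℝ) :
    (∑ i, ∑ j, pd j (fun y => pd i (fun z => 1/2 * M z i j * gaussianPdf μ S z) y) x)
      - (∑ i, pd i (fun y => h y i * gaussianPdf μ S y) x)
    = yCoeff μ S h M x * gaussianPdf μ S x := by
  have hM2 : ∀ i j, ContDiff ℝ ((1:ℕ∞)+1) fun y => M y i j := by
    intro i j; exact_mod_cast hM i j
  have dgp : ∀ y, DifferentiableAt ℝ (gaussianPdf μ S) y := fun y =>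
    ((contDiff_gauss (m := 1) μ S).differentiable (by simp)) y
  have dM : ∀ i j y, DifferentiableAt ℝ (fun z => M z i j) y := fun i j y =>
    ((hM i j).differentiable two_ne_zero) y
  have dpdM : ∀ i j k y, DifferentiableAt ℝ (pd k (fun z => M z i j)) y := fun i j k y =>
    ((contDiff_pd (m := 1) k (hM2 i j)).differentiable (by simp)) y
  have dvv : ∀ i y, DifferentiableAt ℝ (fun y : Fin n → ℝ => (S⁻¹.mulVec (y - μ)) i) y :=
    fun i y => ((contDiff_mulVec (m := 1) S⁻¹ μ i).differentiable (by simp)) y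
  have dh : ∀ i y, DifferentiableAt ℝ (fun z => h z i) y := fun i y =>
    ((hh i).differentiable one_ne_zero) y
  -- first-order term expansion
  have StepH : ∀ i, pd i (fun y => h y i * gaussianPdf μ S y) x
      = pd i (fun z => h z i) x * gaussianPdf μ S x
        - h x i * ((S⁻¹.mulVec (x - μ)) i * gaussianPdf μ S x) := by
    intro i
    rw [pd_mul i (dh i x) (dgp x), pd_gauss μ S hSi x i]
    ring
  -- inner derivative of the second-order term, as a function
  have Step1 : ∀ i j, (pd i (fun z => 1/2 * M z i j * gaussianPdf μ S z))
      = fun y => (1/2 * pd i (fun z => M z i j) y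
          - 1/2 * (M y i j * (S⁻¹.mulVec (y - μ)) i)) * gaussianPdf μ S y := by
    intro i j
    funext y
    have e1 : pd i (fun z => 1/2 * M z i j * gaussianPdf μ S z) y
        = pd i (fun z => 1/2 * M z i j) y * gaussianPdf μ S y
          + (1/2 * M y i j) * pd i (gaussianPdf μ S) y :=
      pd_mul i ((dM i j y).const_mul (1/2)) (dgp y)
    rw [e1, pd_const_mul i (1/2) (dM i j y), pd_gauss μ S hSi y i]
    ring
  have Step2 : ∀ i j, pd j (fun y => pd i (fun z => 1/2 * M z i j * gaussianPdf μ S z) y) x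
      = (1/2 * pd j (fun y => pd i (fun z => M z i j) y) x
          - 1/2 * (pd j (fun y => M y i j) x * (S⁻¹.mulVec (x - μ)) i
              + M x i j * S⁻¹ i j)) * gaussianPdf μ S x
        + (1/2 * pd i (fun y => M y i j) x
            - 1/2 * (M x i j * (S⁻¹.mulVec (x - μ)) i))
          * (-((S⁻¹.mulVec (x - μ)) j) * gaussianPdf μ S x) := by
    intro i j
    have : (fun y => pd i (fun z => 1/2 * M z i j * gaussianPdf μ S z) y)
        = fun y => (1/2 * pd i (fun z => M z i j) y
            - 1/2 * (M y i j * (S⁻¹.mulVec (y - μ)) i)) * gaussianPdf μ S y := by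
      rw [← Step1 i j]
    rw [this]
    have dG : DifferentiableAt ℝ (fun y => 1/2 * pd i (fun z => M z i j) y
        - 1/2 * (M y i j * (S⁻¹.mulVec (y - μ)) i)) x :=
      ((dpdM i j i x).const_mul (1/2)).sub (((dM i j x).mul (dvv i x)).const_mul (1/2))
    rw [pd_mul j dG (dgp x)]
    rw [pd_sub j ((dpdM i j i x).const_mul (1/2)) (((dM i j x).fun_mul (dvv i x)).const_mul (1/2))]
    rw [pd_const_mul j (1/2) (dpdM i j i x), pd_const_mul j (1/2) ((dM i j x).fun_mul (dvv i x))]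
    rw [pd_mul j (dM i j x) (dvv i x), pd_mulVec S⁻¹ μ x i j, pd_gauss μ S hSi x j]
  -- symmetry-based sum identities
  have msymm : ∀ i j, (fun z => M z j i) = fun z => M z i j := fun i j =>
    funext fun z => (hMsymm z).apply i j
  have e1 : (∑ i, ∑ j, pd j (fun y => pd i (fun z => M z i j) y) x)
      = ∑ i, ∑ j, pd i (fun y => pd j (fun z => M z i j) y) x := by
    rw [Finset.sum_comm]
    exact Finset.sum_congr rfl fun i _ => Finset.sum_congr rfl fun j _ => by rw [msymm i j]
  have e2 : (∑ i, ∑ j, pd j (fun y => M y i j) x * (S⁻¹.mulVec (x - μ)) i)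
      = ∑ i, ∑ j, pd i (fun y => M y i j) x * (S⁻¹.mulVec (x - μ)) j := by
    rw [Finset.sum_comm]
    exact Finset.sum_congr rfl fun i _ => Finset.sum_congr rfl fun j _ => by rw [msymm i j]
  -- entry identity
  have e3 : ∀ i j, (-S⁻¹ + S⁻¹ * vecMulVec (x - μ) (x - μ) * (S⁻¹)ᵀ) i j
      = -(S⁻¹ i j) + (S⁻¹.mulVec (x - μ)) i * (S⁻¹.mulVec (x - μ)) j := by
    intro i j
    have hSe : ∀ a b, S⁻¹ a b = S⁻¹ b a := fun a b => by
      conv_lhs => rw [← hSi]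
      rfl
    simp only [Matrix.add_apply, Matrix.neg_apply, hSi, Matrix.mul_apply,
      Matrix.vecMulVec_apply, Matrix.mulVec, dotProduct, Pi.sub_apply]
    congr 1
    rw [Finset.mul_sum]
    apply Finset.sum_congr rfl; intro k _
    rw [Finset.sum_mul, Finset.sum_mul]
    apply Finset.sum_congr rfl; intro l _
    rw [hSe k j]
    ring
  -- put everything together
  simp only [Step2, StepH]
  rw [yCoeff]
  simp only [e3]
  -- distribute sums into atomic sums
  have expand2 : (∑ i, ∑ j, ((1/2 * pd j (fun y => pd i (fun z => M z i j) y) x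
          - 1/2 * (pd j (fun y => M y i j) x * (S⁻¹.mulVec (x - μ)) i
              + M x i j * S⁻¹ i j)) * gaussianPdf μ S x
        + (1/2 * pd i (fun y => M y i j) x
            - 1/2 * (M x i j * (S⁻¹.mulVec (x - μ)) i))
          * (-((S⁻¹.mulVec (x - μ)) j) * gaussianPdf μ S x)))
      = (1/2 * gaussianPdf μ S x) * (∑ i, ∑ j, pd j (fun y => pd i (fun z => M z i j) y) x)
        - (1/2 * gaussianPdf μ S x)
            * (∑ i, ∑ j, pd j (fun y => M y i j) x * (S⁻¹.mulVec (x - μ)) i)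
        - (1/2 * gaussianPdf μ S x) * (∑ i, ∑ j, M x i j * S⁻¹ i j)
        - (1/2 * gaussianPdf μ S x)
            * (∑ i, ∑ j, pd i (fun y => M y i j) x * (S⁻¹.mulVec (x - μ)) j)
        + (1/2 * gaussianPdf μ S x)
            * (∑ i, ∑ j, M x i j * ((S⁻¹.mulVec (x - μ)) i * (S⁻¹.mulVec (x - μ)) j)) := by
    simp only [Finset.mul_sum]
    rw [← Finset.sum_sub_distrib, ← Finset.sum_sub_distrib, ← Finset.sum_sub_distrib,
      ← Finset.sum_add_distrib]
    apply Finset.sum_congr rfl; intro i _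
    rw [← Finset.sum_sub_distrib, ← Finset.sum_sub_distrib, ← Finset.sum_sub_distrib,
      ← Finset.sum_add_distrib]
    apply Finset.sum_congr rfl; intro j _
    ring
  rw [expand2]
  have expandH : (∑ i, (pd i (fun z => h z i) x * gaussianPdf μ S x
      - h x i * ((S⁻¹.mulVec (x - μ)) i * gaussianPdf μ S x)))
      = gaussianPdf μ S x * (∑ i, pd i (fun z => h z i) x)
        - gaussianPdf μ S x * (∑ i, (S⁻¹.mulVec (x - μ)) i * h x i) := by
    simp only [Finset.mul_sum]
    rw [← Finset.sum_sub_distrib]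
    apply Finset.sum_congr rfl; intro i _
    ring
  rw [expandH]
  have expandY : (∑ i, ∑ j, ((-(S⁻¹ i j) + (S⁻¹.mulVec (x - μ)) i * (S⁻¹.mulVec (x - μ)) j)
        * M x i j + pd i (fun y => pd j (fun z => M z i j) y) x))
      = -(∑ i, ∑ j, M x i j * S⁻¹ i j)
        + (∑ i, ∑ j, M x i j * ((S⁻¹.mulVec (x - μ)) i * (S⁻¹.mulVec (x - μ)) j))
        + (∑ i, ∑ j, pd i (fun y => pd j (fun z => M z i j) y) x) := by
    rw [← Finset.sum_neg_distrib, ← Finset.sum_add_distrib, ← Finset.sum_add_distrib]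
    apply Finset.sum_congr rfl; intro i _
    rw [← Finset.sum_neg_distrib, ← Finset.sum_add_distrib, ← Finset.sum_add_distrib]
    apply Finset.sum_congr rfl; intro j _
    ring
  rw [expandY]
  have hdot : (S⁻¹.mulVec (x - μ)) ⬝ᵥ h x = ∑ i, (S⁻¹.mulVec (x - μ)) i * h x i := rfl
  rw [hdot, e1, e2]
  ring

/-- Operator Equivalence Theorem, integral form: `⟨AΨ, p⟩ = ⟨𝒴Ψ, p⟩` for the Gaussian
density `p` and every compactly supported `C²` test function `Ψ`. -/
theorem operator_equivalence_integral (n : ℕ) (hn : 1 ≤ n) (μ : Fin n → ℝ)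
    (S : Matrix (Fin n) (Fin n) ℝ) (hS : S.PosDef) (hSsymm : S.IsSymm)
    (h : (Fin n → ℝ) → Fin n → ℝ) (hh : ∀ i, ContDiff ℝ 1 fun y => h y i)
    (M : (Fin n → ℝ) → Matrix (Fin n) (Fin n) ℝ)
    (hM : ∀ i j, ContDiff ℝ 2 fun y => M y i j)
    (hMsymm : ∀ x, (M x).IsSymm)
    (Ψ : (Fin n → ℝ) → ℝ) (hΨ : ContDiff ℝ 2 Ψ) (hΨc : HasCompactSupport Ψ) :
    ∫ x : Fin n → ℝ,
        ((∑ i, h x i * pd i Ψ x)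
          + (1 / 2) * ∑ i, ∑ j, M x i j * pd i (fun y => pd j Ψ y) x)
          * gaussianPdf μ S x
    = ∫ x : Fin n → ℝ, Ψ x * yCoeff μ S h M x * gaussianPdf μ S x := by
  have hSi : (S⁻¹)ᵀ = S⁻¹ := by rw [Matrix.transpose_nonsing_inv, hSsymm]
  have hΨ1 : ContDiff ℝ 1 Ψ := hΨ.of_le one_le_two
  have hΨ2 : ContDiff ℝ ((1:ℕ∞) + 1) Ψ := by exact_mod_cast hΨ
  have hpdΨ : ∀ j, ContDiff ℝ 1 (fun y => pd j Ψ y) := fun j => contDiff_pd (m := 1) j hΨ2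
  have hu1 : ∀ i, ContDiff ℝ 1 (fun y => h y i * gaussianPdf μ S y) := fun i =>
    (hh i).mul (contDiff_gauss μ S)
  have hu2 : ∀ i j, ContDiff ℝ ((1:ℕ∞) + 1) (fun z => 1/2 * M z i j * gaussianPdf μ S z) := by
    intro i j
    have : ContDiff ℝ 2 (fun z => 1/2 * M z i j * gaussianPdf μ S z) :=
      (contDiff_const.mul (hM i j)).mul (contDiff_gauss μ S)
    exact_mod_cast this
  have hpdu2 : ∀ i j, ContDiff ℝ 1
      (fun y => pd i (fun z => 1/2 * M z i j * gaussianPdf μ S z) y) := fun i j =>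
    contDiff_pd (m := 1) i (hu2 i j)
  have gpc : Continuous (gaussianPdf μ S) := (contDiff_gauss (m := 1) μ S).continuous
  -- integrability of the rearranged LHS pieces
  have intF : ∀ i, Integrable
      (fun x : Fin n → ℝ => pd i Ψ x * (h x i * gaussianPdf μ S x)) := fun i => by
    apply Continuous.integrable_of_hasCompactSupport
    · exact (continuous_pd i hΨ1).mul (((hh i).continuous).mul gpc)
    · exact (hcs_pd i hΨc).mul_right
  have intG : ∀ i j, Integrable (fun x : Fin n → ℝ =>
      pd i (fun y => pd j Ψ y) x * (1/2 * M x i j * gaussianPdf μ S x)) := fun i j => by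
    apply Continuous.integrable_of_hasCompactSupport
    · exact (continuous_pd i (hpdΨ j)).mul
        ((continuous_const.mul (hM i j).continuous).mul gpc)
    · exact (hcs_pd i (hcs_pd j hΨc)).mul_right
  have intYF : ∀ i, Integrable (fun x : Fin n → ℝ =>
      Ψ x * pd i (fun y => h y i * gaussianPdf μ S y) x) := fun i => by
    apply Continuous.integrable_of_hasCompactSupport
    · exact hΨ.continuous.mul (continuous_pd i (hu1 i))
    · exact hΨc.mul_right
  have intYG : ∀ i j, Integrable (fun x : Fin n → ℝ =>
      Ψ x * pd j (fun y => pd i (fun z => 1/2 * M z i j * gaussianPdf μ S z) y) x) :=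
      fun i j => by
    apply Continuous.integrable_of_hasCompactSupport
    · exact hΨ.continuous.mul (continuous_pd j (hpdu2 i j))
    · exact hΨc.mul_right
  -- step A : rearrange the integrand
  have stepA : (fun x : Fin n → ℝ =>
      ((∑ i, h x i * pd i Ψ x)
          + (1 / 2) * ∑ i, ∑ j, M x i j * pd i (fun y => pd j Ψ y) x)
          * gaussianPdf μ S x)
      = fun x : Fin n → ℝ => (∑ i, pd i Ψ x * (h x i * gaussianPdf μ S x))
          + ∑ i, ∑ j, pd i (fun y => pd j Ψ y) x * (1/2 * M x i j * gaussianPdf μ S x) := by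
    funext x
    simp only [add_mul, Finset.mul_sum, Finset.sum_mul]
    congr 1
    · exact Finset.sum_congr rfl fun i _ => by ring
    · exact Finset.sum_congr rfl fun i _ => Finset.sum_congr rfl fun j _ => by ring
  rw [stepA]
  rw [integral_add (integrable_finset_sum _ fun i _ => intF i)
    (integrable_finset_sum _ fun i _ => integrable_finset_sum _ fun j _ => intG i j)]
  rw [integral_finset_sum _ fun i _ => intF i]
  rw [integral_finset_sum _ fun i _ => integrable_finset_sum _ fun j _ => intG i j]
  have ibpF : ∀ i, (∫ x : Fin n → ℝ, pd i Ψ x * (h x i * gaussianPdf μ S x))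
      = - ∫ x : Fin n → ℝ, Ψ x * pd i (fun y => h y i * gaussianPdf μ S y) x := fun i =>
    integral_pd_mul hΨ1 hΨc (hu1 i) i
  have ibpG : ∀ i j, (∫ x : Fin n → ℝ,
        pd i (fun y => pd j Ψ y) x * (1/2 * M x i j * gaussianPdf μ S x))
      = ∫ x : Fin n → ℝ,
          Ψ x * pd j (fun y => pd i (fun z => 1/2 * M z i j * gaussianPdf μ S z) y) x := by
    intro i j
    have h1 := integral_pd_mul (hpdΨ j) (hcs_pd j hΨc) ((hu2 i j).of_le le_add_self) i
    have h2 := integral_pd_mul hΨ1 hΨc (hpdu2 i j) j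
    rw [h1, h2, neg_neg]
  have innerG : ∀ i : Fin n, (∫ x : Fin n → ℝ,
      ∑ j, pd i (fun y => pd j Ψ y) x * (1/2 * M x i j * gaussianPdf μ S x))
      = ∑ j, ∫ x : Fin n → ℝ,
          pd i (fun y => pd j Ψ y) x * (1/2 * M x i j * gaussianPdf μ S x) := fun i =>
    integral_finset_sum _ fun j _ => intG i j
  simp only [innerG]
  simp only [ibpF, ibpG]
  rw [Finset.sum_neg_distrib]
  rw [← integral_finset_sum _ fun i _ => intYF i]
  have inner : ∀ i : Fin n, (∑ j, ∫ x : Fin n → ℝ,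
        Ψ x * pd j (fun y => pd i (fun z => 1/2 * M z i j * gaussianPdf μ S z) y) x)
      = ∫ x : Fin n → ℝ, ∑ j,
        Ψ x * pd j (fun y => pd i (fun z => 1/2 * M z i j * gaussianPdf μ S z) y) x := fun i =>
    (integral_finset_sum _ fun j _ => intYG i j).symm
  simp only [inner]
  rw [← integral_finset_sum _ fun i _ => integrable_finset_sum _ fun j _ => intYG i j]
  rw [neg_add_eq_sub]
  rw [← integral_sub
    (integrable_finset_sum _ fun i _ => integrable_finset_sum _ fun j _ => intYG i j)
    (integrable_finset_sum _ fun i _ => intYF i)]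
  have final : ∀ x : Fin n → ℝ,
      ((∑ i, ∑ j, Ψ x * pd j (fun y => pd i (fun z => 1/2 * M z i j * gaussianPdf μ S z) y) x)
        - ∑ i, Ψ x * pd i (fun y => h y i * gaussianPdf μ S y) x)
      = Ψ x * yCoeff μ S h M x * gaussianPdf μ S x := by
    intro x
    simp only [← Finset.mul_sum]
    rw [← mul_sub, key_pointwise μ S hSi h hh M hM hMsymm x, ← mul_assoc]
  rw [show (fun x : Fin n → ℝ =>
      ((∑ i, ∑ j, Ψ x * pd j (fun y => pd i (fun z => 1/2 * M z i j * gaussianPdf μ S z) y) x)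
        - ∑ i, Ψ x * pd i (fun y => h y i * gaussianPdf μ S y) x))
    = fun x : Fin n → ℝ => Ψ x * yCoeff μ S h M x * gaussianPdf μ S x from funext final]
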